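/- For an additive map f: F_{2^m} → F_{2^m}, if the subspace U = {(x, f(x)) : x in F_{2^m}} of (F_{2^m})^2 is scattered over F_2 (i.e., every F_{2^m}-line of (F_{2^m})^2 meets U in an F_2-subspace of dimension at most 1), then the pointset G(f) ∪ (ℓ_∞ \ D(f)) in PG(2, 2^m) is a hyperoval, where G(f) = {<(x, f(x), 1)> : x in F_{2^m}} and D(f) = {<(x, f(x), 0)> : x in F_{2^m}, x ≠ 0} ⊆ ℓ_∞. -/
import Mathlib

open Submodule Set

section ScatteredAux

variable {K : Type*} [Field K]

lemma span_eq_of_smul {M : Type*} [AddCommGroup M] [Module K M]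
    {v w : M} {c : K} (hc : c ≠ 0) (h : v = c • w) :
    span K ({v} : Set M) = span K {w} := by
  apply le_antisymm <;>
    rw [span_le, Set.singleton_subset_iff, SetLike.mem_coe, mem_span_singleton]
  · exact ⟨c, h.symm⟩
  · exact ⟨c⁻¹, by rw [h, smul_smul, inv_mul_cancel₀ hc, one_smul]⟩

lemma smul_vec3 (c a b d : K) : c • (![a, b, d] : Fin 3 → K) = ![c * a, c * b, c * d] := by
  funext i; fin_cases i <;> simp

omit [Field K] in
lemma vec3_eq_iff {a b d a' b' d' : K} :
    (![a, b, d] : Fin 3 → K) = ![a', b', d'] ↔ a = a' ∧ b = b' ∧ d = d' := by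
  constructor
  · intro h; exact ⟨congrFun h 0, congrFun h 1, congrFun h 2⟩
  · rintro ⟨rfl, rfl, rfl⟩; rfl

lemma span_singleton_eq_imp {M : Type*} [AddCommGroup M] [Module K M]
    {v w : M} (h : span K ({v} : Set M) = span K {w}) : ∃ c : K, v = c • w := by
  have : v ∈ span K ({w} : Set M) := h ▸ mem_span_singleton_self v
  obtain ⟨c, hc⟩ := mem_span_singleton.mp this
  exact ⟨c, hc.symm⟩

def Scatt (f : K →+ K) : Prop :=
  ∀ u v c : K, u ≠ 0 → v ≠ 0 → v = c * u → f v = c * f u → u = v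

variable (f : K →+ K)

lemma dir_inj (hs : Scatt f) {x y : K} (hx : x ≠ 0) (hy : y ≠ 0)
    (h : span K ({![x, f x, 0]} : Set (Fin 3 → K)) = span K {![y, f y, 0]}) : x = y := by
  obtain ⟨c, hc⟩ := span_singleton_eq_imp h
  rw [smul_vec3, vec3_eq_iff] at hc
  exact (hs y x c hy hx hc.1 hc.2.1).symm

lemma graph_inj {x y : K}
    (h : span K ({![x, f x, 1]} : Set (Fin 3 → K)) = span K {![y, f y, 1]}) : x = y := by
  obtain ⟨c, hc⟩ := span_singleton_eq_imp h
  rw [smul_vec3, vec3_eq_iff] at hc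
  obtain ⟨h0, -, h2⟩ := hc
  rw [mul_one] at h2
  rw [h0, ← h2, one_mul]

lemma linf_ncard [Fintype K] :
    {P : Submodule K (Fin 3 → K) | ∃ a b : K, (a, b) ≠ (0, 0) ∧ P = span K {![a, b, 0]}}.ncard
      = Fintype.card K + 1 := by
  classical
  set fn : Option K → Submodule K (Fin 3 → K) :=
    fun o => Option.elim o (span K {![(0:K), 1, 0]}) (fun t => span K {![(1:K), t, 0]}) with hfn
  have hset : {P : Submodule K (Fin 3 → K) | ∃ a b : K, (a, b) ≠ (0, 0) ∧ P = span K {![a, b, 0]}}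
      = Set.range fn := by
    ext P
    constructor
    · rintro ⟨a, b, hab, rfl⟩
      by_cases ha : a = 0
      · have hb : b ≠ 0 := by
          intro hb; exact hab (by simp [ha, hb, Prod.ext_iff])
        subst ha
        have h1 : span K ({![(0:K), b, 0]} : Set (Fin 3 → K)) = span K {![(0:K), 1, 0]} := by
          refine span_eq_of_smul hb ?_
          rw [smul_vec3, vec3_eq_iff]
          exact ⟨by ring, by ring, by ring⟩
        exact ⟨none, h1.symm⟩
      · have h1 : span K ({![a, b, 0]} : Set (Fin 3 → K)) = span K {![(1:K), b / a, 0]} := by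
          refine span_eq_of_smul ha ?_
          rw [smul_vec3, vec3_eq_iff]
          exact ⟨by ring, by field_simp, by ring⟩
        exact ⟨some (b / a), h1.symm⟩
    · rintro ⟨o, rfl⟩
      cases o with
      | none => exact ⟨0, 1, by simp, rfl⟩
      | some t => exact ⟨1, t, by simp, rfl⟩
  have hinj : Function.Injective fn := by
    intro o1 o2 h
    match o1, o2 with
    | none, none => rfl
    | none, some t =>
      exfalso
      obtain ⟨c, hc⟩ := span_singleton_eq_imp (h : span K {![(0:K),1,0]} = span K {![(1:K),t,0]})
      rw [smul_vec3, vec3_eq_iff] at hc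
      have : c = 0 := by simpa using hc.1.symm
      rw [this] at hc
      exact one_ne_zero ((by simpa using hc.2.1) : (1:K) = 0)
    | some t, none =>
      exfalso
      obtain ⟨c, hc⟩ := span_singleton_eq_imp (h : span K {![(1:K),t,0]} = span K {![(0:K),1,0]})
      rw [smul_vec3, vec3_eq_iff] at hc
      exact one_ne_zero (by simpa using hc.1 : (1:K) = 0)
    | some t, some s =>
      obtain ⟨c, hc⟩ := span_singleton_eq_imp (h : span K {![(1:K),t,0]} = span K {![(1:K),s,0]})
      rw [smul_vec3, vec3_eq_iff] at hc
      have hc1 : c = 1 := by simpa using hc.1.symm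
      rw [hc1] at hc
      exact congrArg some (by simpa using hc.2.1)
  rw [hset, ← Set.image_univ, Set.ncard_image_of_injective _ hinj, Set.ncard_univ,
    Nat.card_eq_fintype_card, Fintype.card_option]

lemma D_ncard [Fintype K] (hs : Scatt f) :
    {P : Submodule K (Fin 3 → K) | ∃ x : K, x ≠ 0 ∧ P = span K {![x, f x, 0]}}.ncard
      = Fintype.card K - 1 := by
  have hset : {P : Submodule K (Fin 3 → K) | ∃ x : K, x ≠ 0 ∧ P = span K {![x, f x, 0]}}
      = (fun x : K => span K {![x, f x, 0]}) '' {x : K | x ≠ 0} := by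
    ext P
    constructor
    · rintro ⟨x, hx, rfl⟩; exact ⟨x, hx, rfl⟩
    · rintro ⟨x, hx, rfl⟩; exact ⟨x, hx, rfl⟩
  have hinj : Set.InjOn (fun x : K => span K {![x, f x, 0]}) {x : K | x ≠ 0} :=
    fun u hu v hv h => dir_inj f hs hu hv h
  rw [hset, Set.ncard_image_of_injOn hinj]
  have h2 : {x : K | x ≠ 0} = (Set.univ \ {0}) := by ext; simp
  rw [h2, Set.ncard_diff (Set.subset_univ _), Set.ncard_univ, Set.ncard_singleton,
    Nat.card_eq_fintype_card]

lemma G_ncard [Fintype K] :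
    {P : Submodule K (Fin 3 → K) | ∃ x : K, P = span K {![x, f x, 1]}}.ncard
      = Fintype.card K := by
  have hset : {P : Submodule K (Fin 3 → K) | ∃ x : K, P = span K {![x, f x, 1]}}
      = (fun x : K => span K {![x, f x, 1]}) '' Set.univ := by
    ext P
    constructor
    · rintro ⟨x, rfl⟩; exact ⟨x, trivial, rfl⟩
    · rintro ⟨x, -, rfl⟩; exact ⟨x, rfl⟩
  have hinj : Set.InjOn (fun x : K => span K {![x, f x, 1]}) Set.univ :=
    fun u _ v _ h => graph_inj f h
  rw [hset, Set.ncard_image_of_injOn hinj, Set.ncard_univ, Nat.card_eq_fintype_card]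

lemma finrank_triple {v1 v2 v3 : Fin 3 → K} (h : LinearIndependent K ![v1, v2, v3]) :
    Module.finrank K (span K ({v1, v2, v3} : Set (Fin 3 → K))) = 3 := by
  have hr : Set.range ![v1, v2, v3] = {v1, v2, v3} := by
    simp [Matrix.range_cons, Matrix.range_empty]; ext w; simp; tauto
  have := finrank_span_eq_card h
  rw [hr] at this
  simpa using this

lemma indepGGG (hs : Scatt f) {x y z : K} (hxy : x ≠ y) (hxz : x ≠ z) (hyz : y ≠ z) :
    LinearIndependent K ![![x, f x, 1], ![y, f y, 1], ![z, f z, 1]] := by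
  rw [Fintype.linearIndependent_iff]
  intro g hg
  rw [Fin.sum_univ_three] at hg
  have h0 := congrFun hg 0
  have h1 := congrFun hg 1
  have h2 := congrFun hg 2
  simp at h0 h1 h2
  have hu : y - x ≠ 0 := sub_ne_zero.mpr (Ne.symm hxy)
  have hv : z - x ≠ 0 := sub_ne_zero.mpr (Ne.symm hxz)
  have e1 : g 1 * (y - x) + g 2 * (z - x) = 0 := by linear_combination h0 - x * h2
  have e2 : g 1 * (f y - f x) + g 2 * (f z - f x) = 0 := by linear_combination h1 - f x * h2
  have key : g 1 = 0 ∧ g 2 = 0 := by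
    by_cases hg2 : g 2 = 0
    · refine ⟨?_, hg2⟩
      have : g 1 * (y - x) = 0 := by linear_combination e1 - (z - x) * hg2
      exact (mul_eq_zero.mp this).resolve_right hu
    · exfalso
      have hg1 : g 1 ≠ 0 := by
        intro hg1
        have : g 2 * (z - x) = 0 := by linear_combination e1 - (y - x) * hg1
        exact hv ((mul_eq_zero.mp this).resolve_left hg2)
      have hc1 : z - x = -(g 1) / g 2 * (y - x) := by field_simp; linear_combination e1
      have hc2 : f (z - x) = -(g 1) / g 2 * f (y - x) := by
        rw [map_sub, map_sub]; field_simp; linear_combination e2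
      exact hyz (sub_left_inj.mp (hs (y - x) (z - x) (-(g 1) / g 2) hu hv hc1 hc2))
  have k0 : g 0 = 0 := by linear_combination h2 - key.1 - key.2
  intro i; fin_cases i
  exacts [k0, key.1, key.2]

lemma indepGGI (hs : Scatt f) {x y a b : K} (hxy : x ≠ y) (hab : ¬(a = 0 ∧ b = 0))
    (hD : ∀ w : K, w ≠ 0 →
      span K ({![a, b, 0]} : Set (Fin 3 → K)) ≠ span K {![w, f w, 0]}) :
    LinearIndependent K ![![x, f x, 1], ![y, f y, 1], ![a, b, 0]] := by
  rw [Fintype.linearIndependent_iff]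
  intro g hg
  rw [Fin.sum_univ_three] at hg
  have h0 := congrFun hg 0
  have h1 := congrFun hg 1
  have h2 := congrFun hg 2
  simp at h0 h1 h2
  -- h2 : g 0 + g 1 = 0
  have hu : x - y ≠ 0 := sub_ne_zero.mpr hxy
  have e1 : g 0 * (x - y) + g 2 * a = 0 := by linear_combination h0 - y * h2
  have e2 : g 0 * (f x - f y) + g 2 * b = 0 := by linear_combination h1 - f y * h2
  have key : g 0 = 0 ∧ g 2 = 0 := by
    by_cases hg0 : g 0 = 0
    · refine ⟨hg0, ?_⟩
      by_contra hg2
      apply hab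
      constructor
      · have : g 2 * a = 0 := by linear_combination e1 - (x - y) * hg0
        exact (mul_eq_zero.mp this).resolve_left hg2
      · have : g 2 * b = 0 := by linear_combination e2 - (f x - f y) * hg0
        exact (mul_eq_zero.mp this).resolve_left hg2
    · exfalso
      have hg2 : g 2 ≠ 0 := by
        intro hg2
        have : g 0 * (x - y) = 0 := by linear_combination e1 - a * hg2
        exact hu ((mul_eq_zero.mp this).resolve_left hg0)
      have hc : -(g 0) / g 2 ≠ 0 := by
        simp only [ne_eq, div_eq_zero_iff, neg_eq_zero]; tauto
      refine hD (x - y) hu (span_eq_of_smul hc ?_)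
      rw [smul_vec3, vec3_eq_iff, map_sub]
      refine ⟨?_, ?_, by ring⟩
      · field_simp; linear_combination e1
      · field_simp; linear_combination e2
  have k1 : g 1 = 0 := by linear_combination h2 - key.1
  intro i; fin_cases i
  exacts [key.1, k1, key.2]

lemma indepGII {x a b a' b' : K} (hab : ¬(a = 0 ∧ b = 0)) (hab' : ¬(a' = 0 ∧ b' = 0))
    (hne : span K ({![a, b, 0]} : Set (Fin 3 → K)) ≠ span K {![a', b', 0]}) :
    LinearIndependent K ![![x, f x, 1], ![a, b, 0], ![a', b', 0]] := by
  rw [Fintype.linearIndependent_iff]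
  intro g hg
  rw [Fin.sum_univ_three] at hg
  have h0 := congrFun hg 0
  have h1 := congrFun hg 1
  have h2 := congrFun hg 2
  simp at h0 h1 h2
  -- h2 : g 0 = 0
  have e1 : g 1 * a + g 2 * a' = 0 := by linear_combination h0 - x * h2
  have e2 : g 1 * b + g 2 * b' = 0 := by linear_combination h1 - f x * h2
  have key : g 1 = 0 ∧ g 2 = 0 := by
    by_cases hg1 : g 1 = 0
    · refine ⟨hg1, ?_⟩
      by_contra hg2
      apply hab'
      constructor
      · have : g 2 * a' = 0 := by linear_combination e1 - a * hg1
        exact (mul_eq_zero.mp this).resolve_left hg2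
      · have : g 2 * b' = 0 := by linear_combination e2 - b * hg1
        exact (mul_eq_zero.mp this).resolve_left hg2
    · exfalso
      have hg2 : g 2 ≠ 0 := by
        intro hg2
        apply hab
        constructor
        · have : g 1 * a = 0 := by linear_combination e1 - a' * hg2
          exact (mul_eq_zero.mp this).resolve_left hg1
        · have : g 1 * b = 0 := by linear_combination e2 - b' * hg2
          exact (mul_eq_zero.mp this).resolve_left hg1
      have hc : -(g 2) / g 1 ≠ 0 := by
        simp only [ne_eq, div_eq_zero_iff, neg_eq_zero]; tauto
      refine hne (span_eq_of_smul hc ?_)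
      rw [smul_vec3, vec3_eq_iff]
      refine ⟨?_, ?_, by ring⟩
      · field_simp; linear_combination e1
      · field_simp; linear_combination e2
  intro i; fin_cases i
  exacts [h2, key.1, key.2]

omit [Field K] in
lemma set3_perm_132 {α : Type*} (v1 v2 v3 : α) : ({v1, v2, v3} : Set α) = {v1, v3, v2} := by
  ext w; simp; tauto

omit [Field K] in
lemma set3_perm_231 {α : Type*} (v1 v2 v3 : α) : ({v1, v2, v3} : Set α) = {v2, v3, v1} := by
  ext w; simp; tauto

omit [Field K] in
lemma set3_perm_213 {α : Type*} (v1 v2 v3 : α) : ({v1, v2, v3} : Set α) = {v2, v1, v3} := by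
  ext w; simp; tauto

omit [Field K] in
lemma set3_perm_312 {α : Type*} (v1 v2 v3 : α) : ({v1, v2, v3} : Set α) = {v3, v1, v2} := by
  ext w; simp; tauto

lemma sup_span3 {M : Type*} [AddCommGroup M] [Module K M] (v1 v2 v3 : M) :
    (span K {v1} ⊔ span K {v2} ⊔ span K {v3} : Submodule K M) = span K {v1, v2, v3} := by
  rw [← span_union, ← span_union]
  congr 1
  ext w; simp; tauto

lemma graph_ne_inf (x a b : K) :
    span K ({![x, f x, 1]} : Set (Fin 3 → K)) ≠ span K {![a, b, 0]} := by
  intro h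
  obtain ⟨c, hc⟩ := span_singleton_eq_imp h
  rw [smul_vec3, vec3_eq_iff] at hc
  simpa using hc.2.2

end ScatteredAux


/-- Let `K = F_{2^m}` and let `f : K → K` be additive. If the graph
`U = {(x, f(x))} ⊆ K²` is scattered over `F_2` — i.e. every 1-dimensional `K`-subspace `L`
of `K²` contains at most one nonzero vector of `U` (equivalently `dim_{F_2}(U ∩ L) ≤ 1`) —
then the pointset `S = G(f) ∪ (ℓ_∞ \ D(f))` of `PG(2, 2^m)` is a hyperoval, where
`G(f) = {⟨(x, f(x), 1)⟩ : x ∈ K}`, `D(f) = {⟨(x, f(x), 0)⟩ : x ≠ 0} ⊆ ℓ_∞`, and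
`ℓ_∞ = {⟨(a,b,0)⟩ : (a,b) ≠ (0,0)}`: it has `2^m + 2` points, no three of them collinear
(any three distinct points among them span a 3-dimensional subspace of `K³`). -/
theorem scattered_graph_gives_hyperoval
    (K : Type*) [Field K] [Fintype K] (m : ℕ) (hm : 1 ≤ m)
    (hcard : Fintype.card K = 2 ^ m)
    (f : K →+ K)
    (hscatt : ∀ L : Submodule K (K × K), Module.finrank K L = 1 →
      ∀ u v : K, (u, f u) ∈ L → (v, f v) ∈ L → u ≠ 0 → v ≠ 0 → u = v) :
    letI G : Set (Submodule K (Fin 3 → K)) :=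
      {P | ∃ x : K, P = Submodule.span K {![x, f x, 1]}}
    letI D : Set (Submodule K (Fin 3 → K)) :=
      {P | ∃ x : K, x ≠ 0 ∧ P = Submodule.span K {![x, f x, 0]}}
    letI linf : Set (Submodule K (Fin 3 → K)) :=
      {P | ∃ a b : K, (a, b) ≠ (0, 0) ∧ P = Submodule.span K {![a, b, 0]}}
    letI S : Set (Submodule K (Fin 3 → K)) := G ∪ (linf \ D)
    S.ncard = 2 ^ m + 2 ∧
      ∀ P₁ ∈ S, ∀ P₂ ∈ S, ∀ P₃ ∈ S, P₁ ≠ P₂ → P₁ ≠ P₃ → P₂ ≠ P₃ →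
        Module.finrank K ((P₁ ⊔ P₂ ⊔ P₃ : Submodule K (Fin 3 → K))) = 3 := by
  classical
  have hs : Scatt f := by
    intro u v c hu hv h1 h2
    have hne : (u, f u) ≠ 0 := fun h => hu (congrArg Prod.fst h)
    refine hscatt (span K {(u, f u)}) (finrank_span_singleton hne) u v
      (mem_span_singleton_self _) (mem_span_singleton.mpr ⟨c, ?_⟩) hu hv
    exact Prod.ext (by simpa using h1.symm) (by simpa using h2.symm)
  have hG := G_ncard f
  have hDn := D_ncard f hs
  have hlinf := linf_ncard (K := K)
  have hDsub : {P : Submodule K (Fin 3 → K) | ∃ x : K, x ≠ 0 ∧ P = span K {![x, f x, 0]}}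
      ⊆ {P : Submodule K (Fin 3 → K) | ∃ a b : K, (a, b) ≠ (0, 0) ∧ P = span K {![a, b, 0]}} := by
    rintro P ⟨x, hx, rfl⟩
    exact ⟨x, f x, by simp [Prod.ext_iff, hx], rfl⟩
  have hdiff : ({P : Submodule K (Fin 3 → K) | ∃ a b : K, (a, b) ≠ (0, 0) ∧ P = span K {![a, b, 0]}}
      \ {P : Submodule K (Fin 3 → K) | ∃ x : K, x ≠ 0 ∧ P = span K {![x, f x, 0]}}).ncard = 2 := by
    rw [Set.ncard_diff hDsub (Set.toFinite _), hDn, hlinf]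
    have : 1 ≤ Fintype.card K := Fintype.card_pos
    omega
  refine ⟨?_, ?_⟩
  · have hdisj : Disjoint {P : Submodule K (Fin 3 → K) | ∃ x : K, P = span K {![x, f x, 1]}}
        ({P : Submodule K (Fin 3 → K) | ∃ a b : K, (a, b) ≠ (0, 0) ∧ P = span K {![a, b, 0]}}
          \ {P : Submodule K (Fin 3 → K) | ∃ x : K, x ≠ 0 ∧ P = span K {![x, f x, 0]}}) := by
      rw [Set.disjoint_left]
      rintro P ⟨x, rfl⟩ ⟨⟨a, b, hab, heq⟩, -⟩
      exact graph_ne_inf f x a b heq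
    rw [Set.ncard_union_eq hdisj (Set.toFinite _) (Set.toFinite _), hG, hdiff, hcard]
  · intro P₁ h₁ P₂ h₂ P₃ h₃ h12 h13 h23
    have habc : ∀ a b : K, (a, b) ≠ (0, 0) → ¬(a = 0 ∧ b = 0) := by
      intro a b hab ⟨ha, hb⟩
      exact hab (by simp [ha, hb, Prod.ext_iff])
    rcases h₁ with ⟨x1, rfl⟩ | ⟨⟨a1, b1, hab1, rfl⟩, hD1⟩ <;>
      rcases h₂ with ⟨x2, rfl⟩ | ⟨⟨a2, b2, hab2, rfl⟩, hD2⟩ <;>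
      rcases h₃ with ⟨x3, rfl⟩ | ⟨⟨a3, b3, hab3, rfl⟩, hD3⟩
    · -- GGG
      rw [sup_span3]
      exact finrank_triple (indepGGG f hs (fun h => h12 (by rw [h]))
        (fun h => h13 (by rw [h])) (fun h => h23 (by rw [h])))
    · -- GGI
      rw [sup_span3]
      exact finrank_triple (indepGGI f hs (fun h => h12 (by rw [h])) (habc a3 b3 hab3)
        (fun w hw h => hD3 ⟨w, hw, h⟩))
    · -- GIG
      rw [sup_span3, set3_perm_132]
      exact finrank_triple (indepGGI f hs (fun h => h13 (by rw [h])) (habc a2 b2 hab2)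
        (fun w hw h => hD2 ⟨w, hw, h⟩))
    · -- GII
      rw [sup_span3]
      exact finrank_triple (indepGII f (habc a2 b2 hab2) (habc a3 b3 hab3) h23)
    · -- IGG
      rw [sup_span3, set3_perm_231]
      exact finrank_triple (indepGGI f hs (fun h => h23 (by rw [h])) (habc a1 b1 hab1)
        (fun w hw h => hD1 ⟨w, hw, h⟩))
    · -- IGI
      rw [sup_span3, set3_perm_213]
      exact finrank_triple (indepGII f (habc a1 b1 hab1) (habc a3 b3 hab3) h13)
    · -- IIG
      rw [sup_span3, set3_perm_312]
      exact finrank_triple (indepGII f (habc a1 b1 hab1) (habc a2 b2 hab2) h12)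
    · -- III: impossible by counting
      exfalso
      have hmem1 : span K ({![a1, b1, 0]} : Set (Fin 3 → K)) ∈
          ({P : Submodule K (Fin 3 → K) | ∃ a b : K, (a, b) ≠ (0, 0) ∧ P = span K {![a, b, 0]}}
            \ {P : Submodule K (Fin 3 → K) | ∃ x : K, x ≠ 0 ∧ P = span K {![x, f x, 0]}}) :=
        ⟨⟨a1, b1, hab1, rfl⟩, hD1⟩
      have hmem2 : span K ({![a2, b2, 0]} : Set (Fin 3 → K)) ∈
          ({P : Submodule K (Fin 3 → K) | ∃ a b : K, (a, b) ≠ (0, 0) ∧ P = span K {![a, b, 0]}}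
            \ {P : Submodule K (Fin 3 → K) | ∃ x : K, x ≠ 0 ∧ P = span K {![x, f x, 0]}}) :=
        ⟨⟨a2, b2, hab2, rfl⟩, hD2⟩
      have hmem3 : span K ({![a3, b3, 0]} : Set (Fin 3 → K)) ∈
          ({P : Submodule K (Fin 3 → K) | ∃ a b : K, (a, b) ≠ (0, 0) ∧ P = span K {![a, b, 0]}}
            \ {P : Submodule K (Fin 3 → K) | ∃ x : K, x ≠ 0 ∧ P = span K {![x, f x, 0]}}) :=
        ⟨⟨a3, b3, hab3, rfl⟩, hD3⟩
      have hsub : {span K ({![a1, b1, 0]} : Set (Fin 3 → K)), span K {![a2, b2, 0]},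
          span K {![a3, b3, 0]}} ⊆
          ({P : Submodule K (Fin 3 → K) | ∃ a b : K, (a, b) ≠ (0, 0) ∧ P = span K {![a, b, 0]}}
            \ {P : Submodule K (Fin 3 → K) | ∃ x : K, x ≠ 0 ∧ P = span K {![x, f x, 0]}}) := by
        intro Q hQ
        rcases hQ with rfl | rfl | rfl
        exacts [hmem1, hmem2, hmem3]
      have h3 : ({span K ({![a1, b1, 0]} : Set (Fin 3 → K)), span K {![a2, b2, 0]},
          span K {![a3, b3, 0]}} : Set (Submodule K (Fin 3 → K))).ncard = 3 :=
        Set.ncard_eq_three.mpr ⟨_, _, _, h12, h13, h23, rfl⟩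
      have hle := Set.ncard_le_ncard hsub (Set.toFinite _)
      rw [h3, hdiff] at hle
      omega
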